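/- Let Ω be a topological space and let ψ : Ω → Ω be continuous. The following are equivalent: (i) ψ is strongly run-away; (ii) for every p ≥ 1, the p-th iterate ψ_p is strongly run-away; (iii) for some p ≥ 1, the p-th iterate ψ_p is strongly run-away. -/

import Mathlib

/-- A continuous self-map `ψ` of a topological space is strongly run-away iff every
iterate `ψ_p` (`p ≥ 1`) is strongly run-away, iff some iterate `ψ_p` (`p ≥ 1`) is
strongly run-away. -/
theorem stmt_14 {Ω : Type*} [TopologicalSpace Ω] (ψ : Ω → Ω) (hψ : Continuous ψ) :
    List.TFAE [
      ∀ K : Set Ω, IsCompact K → ∃ N : ℕ, ∀ n, N ≤ n → (ψ^[n] '' K) ∩ K = ∅,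
      ∀ p : ℕ, 1 ≤ p →
        ∀ K : Set Ω, IsCompact K → ∃ N : ℕ, ∀ n, N ≤ n → ((ψ^[p])^[n] '' K) ∩ K = ∅,
      ∃ p : ℕ, 1 ≤ p ∧
        ∀ K : Set Ω, IsCompact K → ∃ N : ℕ, ∀ n, N ≤ n → ((ψ^[p])^[n] '' K) ∩ K = ∅ ] := by
  tfae_have 1 → 2 := by
    intro h p hp K hK
    obtain ⟨N, hN⟩ := h K hK
    refine ⟨N, fun n hn => ?_⟩
    rw [← Function.iterate_mul]
    exact hN (p * n) (hn.trans (Nat.le_mul_of_pos_left n hp))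
  tfae_have 2 → 3 := fun h => ⟨1, le_rfl, h 1 le_rfl⟩
  tfae_have 3 → 1 := by
    rintro ⟨p, hp, h⟩ K hK
    have hp0 : 0 < p := hp
    choose N hN using fun r : ℕ => h (K ∪ ψ^[r] '' K) (hK.union (hK.image (hψ.iterate r)))
    set M := (Finset.range p).sup N with hM
    refine ⟨p * (M + 1), fun n hn => ?_⟩
    have hr : n % p < p := Nat.mod_lt n hp0
    have hm : M + 1 ≤ n / p := Nat.le_div_iff_mul_le hp0 |>.2 (by
      calc (M + 1) * p = p * (M + 1) := Nat.mul_comm _ _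
        _ ≤ n := hn)
    have key := hN (n % p) (n / p)
      ((Finset.le_sup (Finset.mem_range.2 hr)).trans ((Nat.le_succ M).trans hm))
    have hsub : ψ^[n] '' K ⊆ (ψ^[p])^[n / p] '' (K ∪ ψ^[n % p] '' K) := by
      have : ψ^[n] '' K = (ψ^[p])^[n / p] '' (ψ^[n % p] '' K) := by
        rw [← Set.image_comp, ← Function.iterate_mul, ← Function.iterate_add,
          Nat.div_add_mod]
      rw [this]
      exact Set.image_mono Set.subset_union_right
    apply Set.eq_empty_of_subset_empty
    calc ψ^[n] '' K ∩ K
        ⊆ ((ψ^[p])^[n / p] '' (K ∪ ψ^[n % p] '' K)) ∩ (K ∪ ψ^[n % p] '' K) :=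
          Set.inter_subset_inter hsub Set.subset_union_left
      _ = ∅ := key
  tfae_finish
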